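/- Let α and β be finite types with decidable equality, let A = Matrix.fromBlocks P Q Qᵀ R : Matrix (α ⊕ β) (α ⊕ β) (ZMod 2) be symmetric, and assume P is invertible (IsUnit P.det). Set B := R - Qᵀ * P⁻¹ * Q. Then for all i, j : β, B i j = 1 if and only if the determinant of the square submatrix of A with rows indexed by α ⊕ Unit via Sum.elim Sum.inl (fun _ => Sum.inr i) and columns indexed by α ⊕ Unit via Sum.elim Sum.inl (fun _ => Sum.inr j) is nonzero. -/

import Mathlib

open Matrix

/-- for a nonsingular reduction (P invertible), edges of the reduced graph are
detected by determinants: `(R - Qᵀ P⁻¹ Q) i j = 1` iff `det A_{α ∪ {i}, α ∪ {j}} ≠ 0`. -/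
theorem stmt_5 {α β : Type*} [Fintype α] [DecidableEq α] [Fintype β] [DecidableEq β]
    (P : Matrix α α (ZMod 2)) (Q : Matrix α β (ZMod 2)) (R : Matrix β β (ZMod 2))
    (hA : (Matrix.fromBlocks P Q Qᵀ R)ᵀ = Matrix.fromBlocks P Q Qᵀ R)
    (hP : IsUnit P.det) :
    ∀ i j : β, (R - Qᵀ * P⁻¹ * Q) i j = 1 ↔
      ((Matrix.fromBlocks P Q Qᵀ R).submatrix
        (Sum.elim Sum.inl (fun _ : Unit => Sum.inr i))
        (Sum.elim Sum.inl (fun _ : Unit => Sum.inr j))).det ≠ 0 := by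
  intro i j
  have : Invertible P := P.invertibleOfIsUnitDet hP
  have hsub : (Matrix.fromBlocks P Q Qᵀ R).submatrix
        (Sum.elim Sum.inl (fun _ : Unit => Sum.inr i))
        (Sum.elim Sum.inl (fun _ : Unit => Sum.inr j)) =
      Matrix.fromBlocks P (Q.submatrix id (fun _ : Unit => j))
        (Qᵀ.submatrix (fun _ : Unit => i) id)
        ((R.submatrix (fun _ : Unit => i) (fun _ : Unit => j))) := by
    ext a b
    cases a <;> cases b <;> rfl
  rw [hsub, Matrix.det_fromBlocks₁₁]
  have h1 : ((R.submatrix (fun _ : Unit => i) (fun _ : Unit => j)) -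
      Qᵀ.submatrix (fun _ : Unit => i) id * ⅟P * Q.submatrix id (fun _ : Unit => j)).det =
      (R - Qᵀ * P⁻¹ * Q) i j := by
    rw [Matrix.det_unique]
    simp [Matrix.mul_apply, Matrix.invOf_eq_nonsing_inv, Finset.mul_sum, Finset.sum_mul,
      mul_assoc]
  rw [h1]
  have hP1 : P.det = 1 := by
    rcases hP with ⟨u, hu⟩
    fin_cases u <;> simp_all <;> exact hu.symm
  rw [hP1, one_mul]
  set x := (R - Qᵀ * P⁻¹ * Q) i j
  constructor
  · intro h; rw [h]; exact one_ne_zero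
  · intro h; exact Or.resolve_left ((by decide : ∀ y : ZMod 2, y = 0 ∨ y = 1) x) h
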